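/- Let Δ have a primitive positive interpretation I = (d, S, h) in a finite or ω-categorical structure Γ, and let C be any polymorphism algebra of Γ. Then: S induces a subalgebra S of C^d; the kernel K = {(ā, b̄) ∈ S² : h(ā) = h(b̄)} of the coordinate map h is a congruence of S; and the quotient construction yields an algebra B on the domain of Δ (defined by f^B(c₁,…,c_m) := h(f^S(ā₁,…,ā_m)) for any preimages ā_i ∈ S with h(ā_i) = c_i) that is well defined, makes h a surjective homomorphism from S onto B, and satisfies that every basic operation of B is a polymorphism of Δ; in particular B ∈ HSP^fin(C). -/
import Mathlib


open FirstOrder FirstOrder.Language FirstOrder.Language.Structure Cardinal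

/-- Primitive positive formulas over the language `L`, with free variables indexed by `α`
and `n` additional (bound) variables: built from atomic formulas (equalities between terms
and relation symbols applied to terms) using only conjunction and existential quantification. -/
inductive PPFormula (L : FirstOrder.Language.{0, 0}) (α : Type) : ℕ → Type
  | equal {n : ℕ} (t₁ t₂ : L.Term (α ⊕ Fin n)) : PPFormula L α n
  | rel {n m : ℕ} (R : L.Relations m) (ts : Fin m → L.Term (α ⊕ Fin n)) : PPFormula L α n
  | and {n : ℕ} (φ ψ : PPFormula L α n) : PPFormula L α n
  | ex {n : ℕ} (φ : PPFormula L α (n + 1)) : PPFormula L α n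

/-- Realization (satisfaction) of a primitive positive formula in an `L`-structure `D`. -/
def PPFormula.Realize {L : FirstOrder.Language.{0, 0}} {D : Type} [L.Structure D] {α : Type} :
    ∀ {n : ℕ}, PPFormula L α n → (α → D) → (Fin n → D) → Prop
  | _, PPFormula.equal t₁ t₂, v, xs =>
      t₁.realize (Sum.elim v xs) = t₂.realize (Sum.elim v xs)
  | _, PPFormula.rel R ts, v, xs => RelMap R fun i => (ts i).realize (Sum.elim v xs)
  | _, PPFormula.and φ ψ, v, xs => PPFormula.Realize φ v xs ∧ PPFormula.Realize ψ v xs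
  | _, PPFormula.ex φ, v, xs => ∃ a : D, PPFormula.Realize φ v (Fin.snoc xs a)

/-- A relation `R` (on tuples indexed by `α`) is primitive positive definable in the
`L`-structure `D` iff some primitive positive formula defines it. -/
def PPDefinable (L : FirstOrder.Language.{0, 0}) (D : Type) [L.Structure D] {α : Type}
    (R : Set (α → D)) : Prop :=
  ∃ φ : PPFormula L α 0, ∀ v : α → D, v ∈ R ↔ φ.Realize v (fun i => i.elim0)

/-- `f : D^l → D` is a polymorphism of the `L`-structure `D`: a homomorphism from the
`l`-th power of the structure to the structure. -/
def IsPolymorphism (L : FirstOrder.Language.{0, 0}) (D : Type) [L.Structure D] {l : ℕ}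
    (f : (Fin l → D) → D) : Prop :=
  (∀ {n : ℕ} (F : L.Functions n) (a : Fin n → Fin l → D),
      f (fun i => funMap F fun j => a j i) = funMap F fun j => f (a j)) ∧
  (∀ {n : ℕ} (R : L.Relations n) (a : Fin n → Fin l → D),
      (∀ i, RelMap R fun j => a j i) → RelMap R fun j => f (a j))

/-- `f : D^l → D` preserves the relation `R ⊆ D^α`: applying `f` coordinatewise to `l`
tuples in `R` yields a tuple in `R`. -/
def Preserves {D : Type} {α : Type} {l : ℕ} (f : (Fin l → D) → D)
    (R : Set (α → D)) : Prop :=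
  ∀ t : Fin l → α → D, (∀ i, t i ∈ R) → (fun j => f fun i => t i j) ∈ R

/-- The `L`-structure `D` is ω-categorical: its first-order theory has, up to isomorphism,
exactly one countable model. -/
def IsOmegaCategorical (L : FirstOrder.Language.{0, 0}) (D : Type) [L.Structure D] : Prop :=
  (∃ M : Theory.ModelType.{0, 0, 0} (L.completeTheory D), #M = ℵ₀) ∧
  (∀ M N : Theory.ModelType.{0, 0, 0} (L.completeTheory D),
      #M = ℵ₀ → #N = ℵ₀ → Nonempty (M ≃[L] N))

/-- An algebra, given by operations `ops` indexed by `I` with arities `ar`, is a polymorphism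
algebra of the `L`-structure `D` iff its set of basic operations is precisely the set of
polymorphisms of `D`. -/
def IsPolymorphismAlgebra (L : FirstOrder.Language.{0, 0}) (D : Type) [L.Structure D]
    {I : Type} (ar : I → ℕ) (ops : ∀ i, (Fin (ar i) → D) → D) : Prop :=
  (Set.range fun i => (⟨ar i, ops i⟩ : Σ n : ℕ, (Fin n → D) → D)) =
    {p : Σ n : ℕ, (Fin n → D) → D | IsPolymorphism L D p.2}

/-- Membership in the clone of term operations of the algebra `ops`: the smallest set of
operations containing the projections and the basic operations and closed under composition. -/
inductive InClone {A : Type} {I : Type} {ar : I → ℕ}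
    (ops : ∀ i, (Fin (ar i) → A) → A) : ∀ n : ℕ, ((Fin n → A) → A) → Prop
  | proj {n : ℕ} (k : Fin n) : InClone ops n fun x => x k
  | comp (i : I) {n : ℕ} (g : Fin (ar i) → (Fin n → A) → A)
      (hg : ∀ j, InClone ops n (g j)) : InClone ops n fun x => ops i fun j => g j x

/-- `S ⊆ C^d` is (the domain of) a subalgebra of the `d`-th power of the algebra `ops`:
it is closed under all basic operations acting coordinatewise. -/
def ClosedUnderPow {C : Type} {I : Type} {ar : I → ℕ} (ops : ∀ i, (Fin (ar i) → C) → C)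
    {d : ℕ} (S : Set (Fin d → C)) : Prop :=
  ∀ (i : I) (a : Fin (ar i) → Fin d → C), (∀ k, a k ∈ S) →
    (fun j => ops i fun k => a k j) ∈ S

/-- The algebra `opsB` belongs to the pseudovariety `HSP^fin` generated by the algebra `opsC`:
it is a homomorphic image of a subalgebra of a finite power of `opsC`. -/
def InHSPfin {I : Type} {ar : I → ℕ} {C B : Type} (opsC : ∀ i, (Fin (ar i) → C) → C)
    (opsB : ∀ i, (Fin (ar i) → B) → B) : Prop :=
  ∃ (d : ℕ) (S : Set (Fin d → C)) (h : S → B),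
    ClosedUnderPow opsC S ∧ Function.Surjective h ∧
    ∀ (i : I) (a : Fin (ar i) → S) (hm : (fun j => opsC i fun k => (a k).val j) ∈ S),
      h ⟨_, hm⟩ = opsB i fun k => h (a k)

/-- `(d, S, h)` is a primitive positive interpretation of the `L'`-structure `E` in the
`L`-structure `D`: `h : S → E` is surjective, the domain `S ⊆ D^d` is primitive positive
definable in `D`, and each unnested atomic formula of `L'` (equality `x₀ = x₁`, relations
`R(x₁,…,x_m)`, and graphs of functions `x₀ = F(x₁,…,x_m)`) has a primitive positive defining
formula over `L` which is correct on all tuples of elements of `S`. -/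
def IsPPInterpretation (L L' : FirstOrder.Language.{0, 0}) (D E : Type) [L.Structure D]
    [L'.Structure E] (d : ℕ) (S : Set (Fin d → D)) (h : S → E) : Prop :=
  Function.Surjective h ∧
  PPDefinable L D S ∧
  (∃ φ : PPFormula L (Fin 2 × Fin d) 0, ∀ a : Fin 2 → S,
      (φ.Realize (fun p => (a p.1).val p.2) (fun i => i.elim0) ↔ h (a 0) = h (a 1))) ∧
  (∀ (m : ℕ) (R : L'.Relations m), ∃ φ : PPFormula L (Fin m × Fin d) 0, ∀ a : Fin m → S,
      (φ.Realize (fun p => (a p.1).val p.2) (fun i => i.elim0) ↔ RelMap R fun i => h (a i))) ∧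
  (∀ (m : ℕ) (F : L'.Functions m), ∃ φ : PPFormula L (Fin (m + 1) × Fin d) 0,
      ∀ a : Fin (m + 1) → S,
      (φ.Realize (fun p => (a p.1).val p.2) (fun i => i.elim0) ↔
        h (a 0) = funMap F fun i => h (a i.succ)))

/-- `E` has a primitive positive interpretation in `D`. -/
def HasPPInterpretation (L L' : FirstOrder.Language.{0, 0}) (D E : Type) [L.Structure D]
    [L'.Structure E] : Prop :=
  ∃ (d : ℕ) (S : Set (Fin d → D)) (h : S → E), 1 ≤ d ∧ IsPPInterpretation L L' D E d S h

/-- The `(1 + d₁·d₂)`-ary relation (on `E`) defined by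
`x = h₁(h₂(y₁,₁,…,y₁,d₂), …, h₂(y_{d₁},₁,…,y_{d₁},_{d₂}))`. -/
def ComposedGraph {D E : Type} {d₁ d₂ : ℕ} (S₁ : Set (Fin d₁ → D)) (h₁ : S₁ → E)
    (S₂ : Set (Fin d₂ → E)) (h₂ : S₂ → D) : Set (Option (Fin d₁ × Fin d₂) → E) :=
  {t | ∃ (hs : ∀ i : Fin d₁, (fun j => t (some (i, j))) ∈ S₂)
        (hm : (fun i => h₂ ⟨fun j => t (some (i, j)), hs i⟩) ∈ S₁),
      t none = h₁ ⟨fun i => h₂ ⟨fun j => t (some (i, j)), hs i⟩, hm⟩}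

/-- `D` and `E` are primitive positive bi-interpretable: there are mutual primitive positive
interpretations `I = (d₁, S₁, h₁)` and `J = (d₂, S₂, h₂)` such that the graph of `h₁ ∘ h₂` is
primitive positive definable in `E` and the graph of `h₂ ∘ h₁` is primitive positive
definable in `D`. -/
def PPBiInterpretable (L L' : FirstOrder.Language.{0, 0}) (D E : Type) [L.Structure D]
    [L'.Structure E] : Prop :=
  ∃ (d₁ : ℕ) (S₁ : Set (Fin d₁ → D)) (h₁ : S₁ → E)
    (d₂ : ℕ) (S₂ : Set (Fin d₂ → E)) (h₂ : S₂ → D),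
    1 ≤ d₁ ∧ 1 ≤ d₂ ∧
    IsPPInterpretation L L' D E d₁ S₁ h₁ ∧
    IsPPInterpretation L' L E D d₂ S₂ h₂ ∧
    PPDefinable L' E (ComposedGraph S₁ h₁ S₂ h₂) ∧
    PPDefinable L D (ComposedGraph S₂ h₂ S₁ h₁)

/-- The topology of pointwise convergence on `n`-ary operations on `D`, where `D` carries the
discrete topology. -/
def opTop (D : Type) (n : ℕ) : TopologicalSpace ((Fin n → D) → D) :=
  @Pi.topologicalSpace (Fin n → D) (fun _ => D) (fun _ => ⊥)

/-- The topology of pointwise convergence on the `n`-ary part of a clone `C`. -/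
def cloneTop {D : Type} (C : ∀ n : ℕ, Set ((Fin n → D) → D)) (n : ℕ) :
    TopologicalSpace (C n) :=
  (opTop D n).induced Subtype.val

/-- A clone homomorphism from `C` to `C'`: an arity-preserving map sending each projection to
the corresponding projection and commuting with composition. -/
structure CloneHomOn {D E : Type} (C : ∀ n : ℕ, Set ((Fin n → D) → D))
    (C' : ∀ n : ℕ, Set ((Fin n → E) → E)) where
  toFun : ∀ n, C n → C' n
  map_proj : ∀ (n : ℕ) (k : Fin n) (f : C n), f.val = (fun x => x k) →
      (toFun n f).val = fun x => x k
  map_comp : ∀ (m n : ℕ) (f : C m) (g : Fin m → C n) (fg : C n),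
      fg.val = (fun x => f.val fun j => (g j).val x) →
      (toFun n fg).val = fun y => (toFun m f).val fun j => (toFun n (g j)).val y

/-- Continuity of a clone homomorphism with respect to the topologies of pointwise
convergence. -/
def CloneHomOn.IsContinuous {D E : Type} {C : ∀ n : ℕ, Set ((Fin n → D) → D)}
    {C' : ∀ n : ℕ, Set ((Fin n → E) → E)} (ξ : CloneHomOn C C') : Prop :=
  ∀ n, @Continuous _ _ (cloneTop C n) (cloneTop C' n) (ξ.toFun n)

/-- The image of a clone homomorphism is dense. -/
def CloneHomOn.DenseImage {D E : Type} {C : ∀ n : ℕ, Set ((Fin n → D) → D)}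
    {C' : ∀ n : ℕ, Set ((Fin n → E) → E)} (ξ : CloneHomOn C C') : Prop :=
  ∀ n, @Dense _ (cloneTop C' n) (Set.range (ξ.toFun n))

/-- Two clones are isomorphic as topological clones: there are mutually inverse continuous
clone homomorphisms between them. -/
def TopCloneIsomorphic {D E : Type} (C : ∀ n : ℕ, Set ((Fin n → D) → D))
    (C' : ∀ n : ℕ, Set ((Fin n → E) → E)) : Prop :=
  ∃ (ξ : CloneHomOn C C') (ζ : CloneHomOn C' C),
    ξ.IsContinuous ∧ ζ.IsContinuous ∧
    (∀ n f, ζ.toFun n (ξ.toFun n f) = f) ∧ (∀ n g, ξ.toFun n (ζ.toFun n g) = g)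

/-- The polymorphism clone of the `L`-structure `D`. -/
def PolClone (L : FirstOrder.Language.{0, 0}) (D : Type) [L.Structure D] :
    ∀ n : ℕ, Set ((Fin n → D) → D) := fun _ => {f | IsPolymorphism L D f}

/-- The clone of term operations `Clo(ops)` of the algebra `ops`, as a set family. -/
def CloSet {A I : Type} {ar : I → ℕ} (ops : ∀ i, (Fin (ar i) → A) → A) :
    ∀ n : ℕ, Set ((Fin n → A) → A) := fun n => {f | InClone ops n f}

/-- The closure `cl(Clo(ops))` of the clone of term operations of the algebra `ops` in the
topology of pointwise convergence. -/
def ClosedCloSet {A I : Type} {ar : I → ℕ} (ops : ∀ i, (Fin (ar i) → A) → A) :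
    ∀ n : ℕ, Set ((Fin n → A) → A) := fun n => @closure _ (opTop A n) (CloSet ops n)

/-- The (relational) language whose `n`-ary relation symbols are exactly the `n`-ary relations
on `D` preserved by all operations of the algebra `ops`. -/
def invLang {D I : Type} {ar : I → ℕ} (ops : ∀ i, (Fin (ar i) → D) → D) :
    FirstOrder.Language.{0, 0} :=
  ⟨fun _ => Empty, fun n => {R : Set (Fin n → D) // ∀ i, Preserves (ops i) R}⟩

/-- The structure on `D` consisting of all relations preserved by all operations of `ops`. -/
def invStructure {D I : Type} {ar : I → ℕ} (ops : ∀ i, (Fin (ar i) → D) → D) :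
    (invLang ops).Structure D where
  funMap := fun F _ => F.elim
  RelMap := fun R v => v ∈ R.val

/-- The algebra `ops` is locally oligomorphic: the structure consisting of all relations
preserved by all of its operations is ω-categorical. -/
def LocallyOligomorphic {D I : Type} {ar : I → ℕ}
    (ops : ∀ i, (Fin (ar i) → D) → D) : Prop :=
  @IsOmegaCategorical (invLang ops) D (invStructure ops)

/-- The algebra `ops` is finitely related: there is a relational structure on the same domain
with finitely many relation symbols whose polymorphism clone is `cl(Clo(ops))`. -/
def FinitelyRelated {D I : Type} {ar : I → ℕ}
    (ops : ∀ i, (Fin (ar i) → D) → D) : Prop :=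
  ∃ (L : FirstOrder.Language.{0, 0}) (st : L.Structure D),
    (∀ n, IsEmpty (L.Functions n)) ∧ Finite (Σ n : ℕ, L.Relations n) ∧
    ∀ (n : ℕ) (f : (Fin n → D) → D),
      f ∈ ClosedCloSet ops n ↔ @IsPolymorphism L D st n f

/-- A primitive positive formula is unnested iff each of its atomic subformulas is of the form
`x₀ = x₁`, `x₀ = F(x₁,…,x_m)`, or `R(x₁,…,x_m)` for variables `x₀,…,x_m`. -/
def PPFormula.IsUnnested {L : FirstOrder.Language.{0, 0}} {α : Type} :
    ∀ {n : ℕ}, PPFormula L α n → Prop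
  | n, PPFormula.equal t₁ t₂ =>
      (∃ i j : α ⊕ Fin n, t₁ = Term.var i ∧ t₂ = Term.var j) ∨
      (∃ (i : α ⊕ Fin n) (m : ℕ) (F : L.Functions m) (x : Fin m → α ⊕ Fin n),
          t₁ = Term.var i ∧ t₂ = Term.func F fun q => Term.var (x q))
  | n, PPFormula.rel (m := m) _ ts => ∃ x : Fin m → α ⊕ Fin n, ts = fun q => Term.var (x q)
  | _, PPFormula.and φ ψ => φ.IsUnnested ∧ ψ.IsUnnested
  | _, PPFormula.ex φ => φ.IsUnnested

/-- A formula is atomic iff it is an equality of terms or a relation symbol applied to terms. -/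
def PPFormula.IsAtomic {L : FirstOrder.Language.{0, 0}} {α : Type} {n : ℕ} :
    PPFormula L α n → Prop
  | PPFormula.equal _ _ => True
  | PPFormula.rel _ _ => True
  | PPFormula.and _ _ => False
  | PPFormula.ex _ => False



theorem pp_term_poly {L : FirstOrder.Language.{0,0}} {D : Type} [L.Structure D] {l : ℕ}
    {f : (Fin l → D) → D} (hf : IsPolymorphism L D f) {β : Type} (t : L.Term β)
    (w : Fin l → β → D) :
    f (fun i => t.realize (w i)) = t.realize (fun b => f fun i => w i b) := by
  induction t with
  | var b => rfl
  | func F ts ih =>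
      show f (fun i => funMap F fun j => (ts j).realize (w i)) = _
      exact (hf.1 F fun j i => (ts j).realize (w i)).trans
        (congrArg _ (funext fun j => ih j))

theorem pp_preserved {L : FirstOrder.Language.{0,0}} {D : Type} [L.Structure D] {l : ℕ}
    {f : (Fin l → D) → D} (hf : IsPolymorphism L D f) {α : Type} :
    ∀ {n : ℕ} (φ : PPFormula L α n) (v : Fin l → α → D) (xs : Fin l → Fin n → D),
      (∀ i, φ.Realize (v i) (xs i)) →
      φ.Realize (fun a => f fun i => v i a) (fun k => f fun i => xs i k) := by
  intro n φ
  induction φ with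
  | equal t₁ t₂ =>
      intro v xs hv
      have e : (fun b => f fun i => Sum.elim (v i) (xs i) b) =
          Sum.elim (fun a => f fun i => v i a) (fun k => f fun i => xs i k) := by
        funext b; cases b <;> rfl
      show Term.realize _ t₁ = Term.realize _ t₂
      rw [← e, ← pp_term_poly hf t₁, ← pp_term_poly hf t₂]
      exact congrArg f (funext fun i => hv i)
  | rel R ts =>
      intro v xs hv
      have e : (fun b => f fun i => Sum.elim (v i) (xs i) b) =
          Sum.elim (fun a => f fun i => v i a) (fun k => f fun i => xs i k) := by
        funext b; cases b <;> rfl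
      have key : ∀ q, Term.realize
            (Sum.elim (fun a => f fun i => v i a) (fun k => f fun i => xs i k)) (ts q)
          = f fun i => (ts q).realize (Sum.elim (v i) (xs i)) := by
        intro q; rw [← e]; exact (pp_term_poly hf (ts q) _).symm
      show RelMap R fun q => Term.realize _ (ts q)
      rw [show (fun q => Term.realize
            (Sum.elim (fun a => f fun i => v i a) (fun k => f fun i => xs i k)) (ts q))
          = fun q => f fun i => (ts q).realize (Sum.elim (v i) (xs i)) from funext key]
      exact hf.2 R _ hv
  | and φ ψ ihφ ihψ =>
      intro v xs hv
      exact ⟨ihφ v xs (fun i => (hv i).1), ihψ v xs (fun i => (hv i).2)⟩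
  | ex φ ih =>
      intro v xs hv
      choose a ha using hv
      refine ⟨f a, ?_⟩
      have this' := ih v (fun i => Fin.snoc (xs i) (a i)) ha
      have e : Fin.snoc (α := fun _ => D) (fun k => f fun i => xs i k) (f a)
          = fun k => f fun i => Fin.snoc (α := fun _ => D) (xs i) (a i) k := by
        funext k
        induction k using Fin.lastCases with
        | last => simp
        | cast j => simp
      rw [e]
      exact this'

theorem pp_preserved0 {L : FirstOrder.Language.{0,0}} {D : Type} [L.Structure D] {l : ℕ}
    {f : (Fin l → D) → D} (hf : IsPolymorphism L D f) {α : Type}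
    (φ : PPFormula L α 0) (v : Fin l → α → D)
    (hv : ∀ i, φ.Realize (v i) (fun j => j.elim0)) :
    φ.Realize (fun a => f fun i => v i a) (fun j => j.elim0) := by
  have this' := pp_preserved hf φ v (fun _ j => j.elim0) hv
  have e : (fun j : Fin 0 => (j.elim0 : D)) = fun k : Fin 0 => f fun i => (k.elim0 : D) :=
    funext fun j => j.elim0
  rw [e]
  exact this'


/-- **Lemma (from pp interpretations to pseudovarieties).** Let `Δ` (the `L'`-structure `E`)
have a primitive positive interpretation `(d, S, h)` in the finite or ω-categorical
structure `Γ` (the `L`-structure `D`), and let `C` be any polymorphism algebra of `Γ`.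
Then `S` induces a subalgebra of `C^d`; the kernel of `h` is a congruence of this
subalgebra; and there is an algebra `B` on the domain of `Δ` such that `h` is a surjective
homomorphism onto `B`, every basic operation of `B` is a polymorphism of `Δ`, and
`B ∈ HSP^fin(C)`. -/
theorem statement11 (L L' : FirstOrder.Language.{0, 0}) (D E : Type)
    [L.Structure D] [L'.Structure E]
    (hD : Finite D ∨ IsOmegaCategorical L D)
    (d : ℕ) (hd : 1 ≤ d) (S : Set (Fin d → D)) (h : S → E)
    (hint : IsPPInterpretation L L' D E d S h)
    {I : Type} (ar : I → ℕ) (opsC : ∀ i, (Fin (ar i) → D) → D)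
    (hC : IsPolymorphismAlgebra L D ar opsC) :
    ClosedUnderPow opsC S ∧
    (∀ (i : I) (a b : Fin (ar i) → S), (∀ k, h (a k) = h (b k)) →
      ∀ (hma : (fun j => opsC i fun k => (a k).val j) ∈ S)
        (hmb : (fun j => opsC i fun k => (b k).val j) ∈ S),
        h ⟨_, hma⟩ = h ⟨_, hmb⟩) ∧
    ∃ opsB : ∀ i, (Fin (ar i) → E) → E,
      (∀ (i : I) (a : Fin (ar i) → S)
          (hm : (fun j => opsC i fun k => (a k).val j) ∈ S),
        h ⟨_, hm⟩ = opsB i fun k => h (a k)) ∧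
      (∀ i, IsPolymorphism L' E (opsB i)) ∧
      InHSPfin opsC opsB := by
  obtain ⟨hsurj, ⟨φS, hφS⟩, ⟨φeq, hφeq⟩, hrel, hfun⟩ := hint
  have hpoly : ∀ i, IsPolymorphism L D (opsC i) := by
    intro i
    have : (⟨ar i, opsC i⟩ : Σ n, (Fin n → D) → D) ∈
        {p : Σ n : ℕ, (Fin n → D) → D | IsPolymorphism L D p.2} := by
      rw [← hC]; exact ⟨i, rfl⟩
    exact this
  have hclosed : ClosedUnderPow opsC S := by
    intro i a ha
    have key := pp_preserved0 (hpoly i) φS a (fun k => (hφS (a k)).mp (ha k))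
    exact (hφS _).mpr key
  have hker : ∀ (i : I) (a b : Fin (ar i) → S), (∀ k, h (a k) = h (b k)) →
      ∀ (hma : (fun j => opsC i fun k => (a k).val j) ∈ S)
        (hmb : (fun j => opsC i fun k => (b k).val j) ∈ S),
        h ⟨_, hma⟩ = h ⟨_, hmb⟩ := by
    intro i a b hab hma hmb
    have hv : ∀ k, φeq.Realize (fun p => ((![a k, b k] : Fin 2 → S) p.1).val p.2)
        (fun j => j.elim0) := by
      intro k
      refine (hφeq ![a k, b k]).mpr ?_
      simpa using hab k
    have key := pp_preserved0 (hpoly i) φeq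
      (fun k p => ((![a k, b k] : Fin 2 → S) p.1).val p.2) hv
    have ec : (fun p : Fin 2 × Fin d => opsC i fun k => ((![a k, b k] : Fin 2 → S) p.1).val p.2)
        = fun p => (((![⟨_, hma⟩, ⟨_, hmb⟩] : Fin 2 → S)) p.1).val p.2 := by
      funext p
      obtain ⟨q, j⟩ := p
      fin_cases q <;> simp
    rw [ec] at key
    have := (hφeq ![⟨_, hma⟩, ⟨_, hmb⟩]).mp key
    simpa using this
  choose pre hpre using hsurj
  refine ⟨hclosed, hker, fun i c =>
    h ⟨fun j => opsC i fun k => (pre (c k)).val j,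
      hclosed i (fun k => (pre (c k)).val) (fun k => (pre (c k)).2)⟩, ?_, ?_, ?_⟩
  · intro i a hm
    exact hker i a (fun k => pre (h (a k))) (fun k => (hpre _).symm) hm _
  · intro i
    constructor
    · intro n F a
      obtain ⟨φF, hφF⟩ := hfun n F
      have hv : ∀ k, φF.Realize (fun p =>
          ((Fin.cases (pre (funMap F fun j => a j k)) (fun j => pre (a j k)) :
            ∀ _ : Fin (n+1), S) p.1).val p.2) (fun j => j.elim0) := by
        intro k
        refine (hφF _).mpr ?_
        simp [hpre]
      have key := pp_preserved0 (hpoly i) φF _ hv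
      exact (hφF (fun q => ⟨fun jd => opsC i fun k =>
          ((Fin.cases (pre (funMap F fun j => a j k)) (fun j => pre (a j k)) :
            ∀ _ : Fin (n+1), S) q).val jd,
          hclosed i _ (fun k => ((Fin.cases (pre (funMap F fun j => a j k))
            (fun j => pre (a j k)) : ∀ _ : Fin (n+1), S) q).2)⟩)).mp key
    · intro n R a ha
      obtain ⟨φR, hφR⟩ := hrel n R
      have hv : ∀ k, φR.Realize (fun p => (pre (a p.1 k)).val p.2) (fun j => j.elim0) := by
        intro k
        refine (hφR (fun j => pre (a j k))).mpr ?_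
        simpa [hpre] using ha k
      have key := pp_preserved0 (hpoly i) φR (fun k p => (pre (a p.1 k)).val p.2) hv
      exact (hφR (fun j => ⟨fun jd => opsC i fun k => (pre (a j k)).val jd,
        hclosed i _ (fun k => (pre (a j k)).2)⟩)).mp key
  · refine ⟨d, S, h, hclosed, fun e => ⟨pre e, hpre e⟩, ?_⟩
    intro i a hm
    exact hker i a (fun k => pre (h (a k))) (fun k => (hpre _).symm) hm _
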